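/- Let n ≥ 2 and let α_1, …, α_n and G_1, …, G_n be positive real numbers. Then Σ_{j=2}^{n} ( α_j · G_j^{j+1} / G_{j-1}^{j-1} − α_{j-1} · G_j^{j} / G_{j-1}^{j-2} ) ≥ (1/2) · ( −(α_1^3/α_2^2)·G_1^2 + (α_{n-1}^{n-1}/α_n^{n-2})·G_n^2 + Σ_{j=2}^{n-1} ( α_{j-1}^{j-1}/α_j^{j-2} − α_j^{j+2}/α_{j+1}^{j+1} )·G_j^2 ). -/

import Mathlib

open Finset

lemma schumacher_core (m : ℕ) (s : ℝ) (hs : 0 < s) :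
    0 ≤ (s - 1) * (s ^ (m + 2) - (s + 1) / 2) := by
  have h1 : 0 ≤ (s - 1) * (s ^ m - 1) := by
    rcases le_total 1 s with h | h
    · have : 1 ≤ s ^ m := one_le_pow₀ h
      nlinarith
    · have : s ^ m ≤ 1 := pow_le_one₀ hs.le h
      nlinarith
  have h2 : (s - 1) * (s ^ (m + 2) - (s + 1) / 2)
      = s ^ 2 * ((s - 1) * (s ^ m - 1)) + (s - 1) ^ 2 * (2 * s + 1) / 2 := by
    ring
  rw [h2]
  have h3 : 0 ≤ s ^ 2 * ((s - 1) * (s ^ m - 1)) := mul_nonneg (sq_nonneg s) h1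
  nlinarith [sq_nonneg (s - 1)]

lemma schumacher_key (m : ℕ) (a b x y : ℝ) (ha : 0 < a) (hb : 0 < b) (hx : 0 < x)
    (hy : 0 < y) :
    b * y ^ (m + 3) / x ^ (m + 1) - a * y ^ (m + 2) / x ^ m
      ≥ (1 / 2) * (a ^ (m + 1) / b ^ m * y ^ 2 - a ^ (m + 3) / b ^ (m + 2) * x ^ 2) := by
  set s := b * y / (a * x) with hs_def
  have hs : 0 < s := by positivity
  have core := schumacher_core m s hs
  have expand : b * y ^ (m + 3) / x ^ (m + 1) - a * y ^ (m + 2) / x ^ m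
      - (1 / 2) * (a ^ (m + 1) / b ^ m * y ^ 2 - a ^ (m + 3) / b ^ (m + 2) * x ^ 2)
      = (a ^ (m + 3) * x ^ 2 / b ^ (m + 2)) * ((s - 1) * (s ^ (m + 2) - (s + 1) / 2)) := by
    rw [hs_def, div_pow, mul_pow, mul_pow]
    field_simp
    ring
  have hpos : 0 ≤ a ^ (m + 3) * x ^ 2 / b ^ (m + 2) := by positivity
  nlinarith [mul_nonneg hpos core]

/-- Schumacher's algebraic lemma (Lemma 17 of [Sch17]). -/
theorem schumacher_lemma (n : ℕ) (hn : 2 ≤ n) (α G : ℕ → ℝ)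
    (hα : ∀ j, 1 ≤ j → j ≤ n → 0 < α j) (hG : ∀ j, 1 ≤ j → j ≤ n → 0 < G j) :
    ∑ j ∈ Finset.Icc 2 n,
        (α j * G j ^ (j + 1) / G (j - 1) ^ (j - 1)
          - α (j - 1) * G j ^ j / G (j - 1) ^ (j - 2))
      ≥ (1 / 2) *
        (-(α 1 ^ 3 / α 2 ^ 2) * G 1 ^ 2
          + (α (n - 1) ^ (n - 1) / α n ^ (n - 2)) * G n ^ 2
          + ∑ j ∈ Finset.Icc 2 (n - 1),
              (α (j - 1) ^ (j - 1) / α j ^ (j - 2)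
                - α j ^ (j + 2) / α (j + 1) ^ (j + 1)) * G j ^ 2) := by
  induction n, hn using Nat.le_induction with
  | base =>
      have h1 := schumacher_key 0 (α 1) (α 2) (G 1) (G 2)
        (hα 1 (by norm_num) (by norm_num)) (hα 2 (by norm_num) (by norm_num))
        (hG 1 (by norm_num) (by norm_num)) (hG 2 (by norm_num) (by norm_num))
      norm_num at h1 ⊢
      linarith
  | succ n hn ih =>
      obtain ⟨p, rfl⟩ : ∃ p, n = p + 2 := ⟨n - 2, by omega⟩
      have hα' : ∀ j, 1 ≤ j → j ≤ p + 2 → 0 < α j := fun j h1 h2 => hα j h1 (by omega)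
      have hG' : ∀ j, 1 ≤ j → j ≤ p + 2 → 0 < G j := fun j h1 h2 => hG j h1 (by omega)
      have IH := ih hα' hG'
      have hkey := schumacher_key (p + 1) (α (p + 2)) (α (p + 3)) (G (p + 2)) (G (p + 3))
        (hα (p + 2) (by omega) (by omega)) (hα (p + 3) (by omega) (by omega))
        (hG (p + 2) (by omega) (by omega)) (hG (p + 3) (by omega) (by omega))
      have hL : ∑ j ∈ Finset.Icc 2 (p + 2 + 1),
            (α j * G j ^ (j + 1) / G (j - 1) ^ (j - 1)
              - α (j - 1) * G j ^ j / G (j - 1) ^ (j - 2))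
          = (∑ j ∈ Finset.Icc 2 (p + 2),
              (α j * G j ^ (j + 1) / G (j - 1) ^ (j - 1)
                - α (j - 1) * G j ^ j / G (j - 1) ^ (j - 2)))
            + (α (p + 3) * G (p + 3) ^ (p + 4) / G (p + 2) ^ (p + 2)
                - α (p + 2) * G (p + 3) ^ (p + 3) / G (p + 2) ^ (p + 1)) := by
        rw [Finset.sum_Icc_succ_top (by omega)]
        congr 1
      have hR : ∑ j ∈ Finset.Icc 2 (p + 2 + 1 - 1),
            (α (j - 1) ^ (j - 1) / α j ^ (j - 2)
              - α j ^ (j + 2) / α (j + 1) ^ (j + 1)) * G j ^ 2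
          = (∑ j ∈ Finset.Icc 2 (p + 2 - 1),
              (α (j - 1) ^ (j - 1) / α j ^ (j - 2)
                - α j ^ (j + 2) / α (j + 1) ^ (j + 1)) * G j ^ 2)
            + (α (p + 1) ^ (p + 1) / α (p + 2) ^ p
                - α (p + 2) ^ (p + 4) / α (p + 3) ^ (p + 3)) * G (p + 2) ^ 2 := by
        have e0 : p + 2 + 1 - 1 = p + 1 + 1 := by omega
        have e5 : p + 2 - 1 = p + 1 := by omega
        rw [e0, Finset.sum_Icc_succ_top (by omega), e5]
        congr 1
      rw [hL, hR]
      have e11 : p + 1 + 3 = p + 4 := by omega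
      have e12 : p + 1 + 2 = p + 3 := by omega
      rw [e11, e12] at hkey
      simp only [show p + 2 + 1 = p + 3 from rfl, show p + 2 + 1 - 1 = p + 2 from rfl,
        show p + 2 + 1 - 2 = p + 1 from rfl, show p + 2 - 1 = p + 1 from rfl,
        show p + 2 - 2 = p from rfl] at IH ⊢
      linarith
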